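/- arXiv:0910.3757 — 4 statements merged into one kernel-verified Lean document; each statement's English description precedes it below -/
import Mathlib

section
/- Let n,m be positive integers, T>0, L≥0 with LT<1, let f:ℝⁿ×ℝᵐ→ℝⁿ be continuous with |f(x,u)−f(y,u)| ≤ L|x−y| and |f(x,u)| ≤ L|x|+L|u| for all x,y∈ℝⁿ, u∈ℝᵐ, and let u:[0,T]→ℝᵐ be bounded and measurable. Let x,y₀∈ℝⁿ and let y:[0,T]→ℝⁿ be continuous with y(t) = y₀ + ∫₀ᵗ f(y(τ),u(τ)) dτ for all t∈[0,T]. Then for every integer l≥1, |Q^l_{T,u}x − y(T)| ≤ ((LT)^{l+1}/(1−LT)) · (|x| + sup_{0≤τ≤T}|u(τ)|) + e^{LT} |x − y₀|. -/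
open Set MeasureTheory

noncomputable section

/-- The Picard operator `(P_{T,u}x)(t) = x(0) + ∫₀ᵗ f(x(τ),u(τ)) dτ`. -/
def picard {n m : ℕ}
    (f : EuclideanSpace ℝ (Fin n) → EuclideanSpace ℝ (Fin m) → EuclideanSpace ℝ (Fin n))
    (u : ℝ → EuclideanSpace ℝ (Fin m)) (x : ℝ → EuclideanSpace ℝ (Fin n)) :
    ℝ → EuclideanSpace ℝ (Fin n) :=
  fun t => x 0 + ∫ τ in (0:ℝ)..t, f (x τ) (u τ)

/-- `Q^l_{T,u} x := (P^l_{T,u} x̄)(T)` where `x̄` is the constant function equal to `x`. -/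
def Qiter {n m : ℕ}
    (f : EuclideanSpace ℝ (Fin n) → EuclideanSpace ℝ (Fin m) → EuclideanSpace ℝ (Fin n))
    (u : ℝ → EuclideanSpace ℝ (Fin m)) (T : ℝ) (l : ℕ) (x : EuclideanSpace ℝ (Fin n)) :
    EuclideanSpace ℝ (Fin n) :=
  (picard f u)^[l] (fun _ => x) T

section Aux

variable {n m : ℕ} {T L C : ℝ}
  {f : EuclideanSpace ℝ (Fin n) → EuclideanSpace ℝ (Fin m) → EuclideanSpace ℝ (Fin n)}
  {u : ℝ → EuclideanSpace ℝ (Fin m)}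

lemma aux_integrableOn (hL : 0 ≤ L)
    (hf_cont : Continuous fun p : EuclideanSpace ℝ (Fin n) × EuclideanSpace ℝ (Fin m) => f p.1 p.2)
    (hf_growth : ∀ x v, ‖f x v‖ ≤ L * ‖x‖ + L * ‖v‖)
    (hu_meas : Measurable u) (hC : ∀ t ∈ Icc (0:ℝ) T, ‖u t‖ ≤ C)
    {z : ℝ → EuclideanSpace ℝ (Fin n)} (hz : ContinuousOn z (Icc 0 T)) :
    IntegrableOn (fun τ => f (z τ) (u τ)) (Icc 0 T) volume := by
  obtain ⟨Mz, hMz⟩ := isCompact_Icc.exists_bound_of_continuousOn hz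
  have hmeas : AEStronglyMeasurable (fun τ => f (z τ) (u τ)) (volume.restrict (Icc 0 T)) := by
    have h1 : AEMeasurable z (volume.restrict (Icc (0:ℝ) T)) := hz.aemeasurable measurableSet_Icc
    have h2 : AEMeasurable (fun τ => (z τ, u τ)) (volume.restrict (Icc (0:ℝ) T)) :=
      h1.prodMk hu_meas.aemeasurable
    exact (hf_cont.measurable.comp_aemeasurable h2).aestronglyMeasurable
  refine Integrable.mono' (g := fun _ => L * Mz + L * C)
    (integrableOn_const measure_Icc_lt_top.ne enorm_ne_top) hmeas ?_
  refine (ae_restrict_iff' measurableSet_Icc).mpr (ae_of_all _ fun τ hτ => ?_)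
  calc ‖f (z τ) (u τ)‖ ≤ L * ‖z τ‖ + L * ‖u τ‖ := hf_growth _ _
    _ ≤ L * Mz + L * C := by
        have := hMz τ hτ; have := hC τ hτ
        gcongr

lemma aux_intervalIntegrable (hL : 0 ≤ L)
    (hf_cont : Continuous fun p : EuclideanSpace ℝ (Fin n) × EuclideanSpace ℝ (Fin m) => f p.1 p.2)
    (hf_growth : ∀ x v, ‖f x v‖ ≤ L * ‖x‖ + L * ‖v‖)
    (hu_meas : Measurable u) (hC : ∀ t ∈ Icc (0:ℝ) T, ‖u t‖ ≤ C)
    {z : ℝ → EuclideanSpace ℝ (Fin n)} (hz : ContinuousOn z (Icc 0 T))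
    {t : ℝ} (ht : t ∈ Icc (0:ℝ) T) :
    IntervalIntegrable (fun τ => f (z τ) (u τ)) volume 0 t := by
  rw [intervalIntegrable_iff]
  refine (aux_integrableOn hL hf_cont hf_growth hu_meas hC hz).mono_set ?_
  rw [uIoc_of_le ht.1]
  exact Ioc_subset_Icc_self.trans (Icc_subset_Icc_right ht.2)

lemma aux_picard_cont (hT : 0 ≤ T) (hL : 0 ≤ L)
    (hf_cont : Continuous fun p : EuclideanSpace ℝ (Fin n) × EuclideanSpace ℝ (Fin m) => f p.1 p.2)
    (hf_growth : ∀ x v, ‖f x v‖ ≤ L * ‖x‖ + L * ‖v‖)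
    (hu_meas : Measurable u) (hC : ∀ t ∈ Icc (0:ℝ) T, ‖u t‖ ≤ C)
    {z : ℝ → EuclideanSpace ℝ (Fin n)} (hz : ContinuousOn z (Icc 0 T)) :
    ContinuousOn (picard f u z) (Icc 0 T) := by
  have h := intervalIntegral.continuousOn_primitive_interval
    (μ := volume) (f := fun τ => f (z τ) (u τ)) (a := 0) (b := T)
    (by rw [uIcc_of_le hT]; exact aux_integrableOn hL hf_cont hf_growth hu_meas hC hz)
  rw [uIcc_of_le hT] at h
  exact continuousOn_const.add h

lemma aux_master (hT : 0 ≤ T) (hL : 0 ≤ L)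
    (hf_cont : Continuous fun p : EuclideanSpace ℝ (Fin n) × EuclideanSpace ℝ (Fin m) => f p.1 p.2)
    (hf_lip : ∀ (x y : EuclideanSpace ℝ (Fin n)) (v : EuclideanSpace ℝ (Fin m)),
      ‖f x v - f y v‖ ≤ L * ‖x - y‖)
    (hf_growth : ∀ x v, ‖f x v‖ ≤ L * ‖x‖ + L * ‖v‖)
    (hu_meas : Measurable u) (hC : ∀ t ∈ Icc (0:ℝ) T, ‖u t‖ ≤ C)
    {z w : ℝ → EuclideanSpace ℝ (Fin n)}
    (hz : ContinuousOn z (Icc 0 T)) (hw : ContinuousOn w (Icc 0 T))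
    {g : ℝ → ℝ} (hg : Continuous g) (hg0 : ∀ s ∈ Icc (0:ℝ) T, 0 ≤ g s)
    (hzw : ∀ τ ∈ Icc (0:ℝ) T, ‖z τ - w τ‖ ≤ g τ)
    {t : ℝ} (ht : t ∈ Icc (0:ℝ) T) :
    ‖picard f u z t - picard f u w t‖ ≤ ‖z 0 - w 0‖ + ∫ s in (0:ℝ)..t, L * g s := by
  have hiz := aux_intervalIntegrable hL hf_cont hf_growth hu_meas hC hz ht
  have hiw := aux_intervalIntegrable hL hf_cont hf_growth hu_meas hC hw ht
  have hrw : picard f u z t - picard f u w t =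
      (z 0 - w 0) + ∫ s in (0:ℝ)..t, (f (z s) (u s) - f (w s) (u s)) := by
    rw [intervalIntegral.integral_sub hiz hiw]; unfold picard; abel
  rw [hrw]
  refine (norm_add_le _ _).trans (add_le_add_right ?_ _)
  have hb : ‖∫ s in (0:ℝ)..t, (f (z s) (u s) - f (w s) (u s))‖ ≤
      |∫ s in (0:ℝ)..t, L * g s| := by
    refine intervalIntegral.norm_integral_le_abs_of_norm_le ?_
      ((continuous_const.mul hg).intervalIntegrable 0 t)
    refine (ae_restrict_iff' measurableSet_uIoc).mpr (ae_of_all _ fun s hs => ?_)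
    have hs' : s ∈ Icc (0:ℝ) T := by
      rw [uIoc_of_le ht.1] at hs
      exact ⟨hs.1.le, hs.2.trans ht.2⟩
    exact (hf_lip _ _ _).trans (mul_le_mul_of_nonneg_left (hzw s hs') hL)
  refine hb.trans (le_of_eq (abs_of_nonneg ?_))
  refine intervalIntegral.integral_nonneg ht.1 fun s hs => ?_
  exact mul_nonneg hL (hg0 s ⟨hs.1, hs.2.trans ht.2⟩)

end Aux

theorem stmt4 (n m : ℕ) (hn : 0 < n) (hm : 0 < m) (T L : ℝ) (hT : 0 < T) (hL : 0 ≤ L)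
    (hLT : L * T < 1)
    (f : EuclideanSpace ℝ (Fin n) → EuclideanSpace ℝ (Fin m) → EuclideanSpace ℝ (Fin n))
    (hf_cont : Continuous fun p : EuclideanSpace ℝ (Fin n) × EuclideanSpace ℝ (Fin m) => f p.1 p.2)
    (hf_lip : ∀ (x y : EuclideanSpace ℝ (Fin n)) (v : EuclideanSpace ℝ (Fin m)),
      ‖f x v - f y v‖ ≤ L * ‖x - y‖)
    (hf_growth : ∀ (x : EuclideanSpace ℝ (Fin n)) (v : EuclideanSpace ℝ (Fin m)),
      ‖f x v‖ ≤ L * ‖x‖ + L * ‖v‖)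
    (u : ℝ → EuclideanSpace ℝ (Fin m)) (hu_meas : Measurable u)
    (hu_bd : ∃ C, ∀ t ∈ Set.Icc (0:ℝ) T, ‖u t‖ ≤ C)
    (x y₀ : EuclideanSpace ℝ (Fin n))
    (y : ℝ → EuclideanSpace ℝ (Fin n)) (hy : ContinuousOn y (Set.Icc 0 T))
    (hy_sol : ∀ t ∈ Set.Icc (0:ℝ) T, y t = y₀ + ∫ τ in (0:ℝ)..t, f (y τ) (u τ))
    (l : ℕ) (hl : 1 ≤ l) :
    ‖Qiter f u T l x - y T‖ ≤
      ((L * T) ^ (l + 1) / (1 - L * T)) * (‖x‖ + ⨆ τ : Set.Icc (0:ℝ) T, ‖u τ‖) +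
        Real.exp (L * T) * ‖x - y₀‖ := by
  -- the supremum of ‖u‖ on [0,T]
  set C : ℝ := ⨆ τ : Set.Icc (0:ℝ) T, ‖u τ‖ with hCdef
  obtain ⟨C₀, hC₀⟩ := hu_bd
  have hbdd : BddAbove (Set.range fun τ : Set.Icc (0:ℝ) T => ‖u τ‖) := by
    refine ⟨C₀, ?_⟩
    rintro _ ⟨τ, rfl⟩
    exact hC₀ τ τ.2
  have hC : ∀ t ∈ Icc (0:ℝ) T, ‖u t‖ ≤ C := fun t ht =>
    le_ciSup hbdd (⟨t, ht⟩ : Set.Icc (0:ℝ) T)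
  have hC0 : 0 ≤ C :=
    le_trans (norm_nonneg _) (hC 0 ⟨le_refl 0, hT.le⟩)
  have hTmem : T ∈ Icc (0:ℝ) T := ⟨hT.le, le_refl T⟩
  -- the Picard iterates
  set X : ℕ → ℝ → EuclideanSpace ℝ (Fin n) := fun k => (picard f u)^[k] (fun _ => x) with hXdef
  have hXsucc : ∀ k, X (k + 1) = picard f u (X k) := fun k =>
    Function.iterate_succ_apply' (picard f u) k _
  have hX0 : ∀ k, X k 0 = x := by
    intro k
    induction k with
    | zero => rfl
    | succ k ih =>
      rw [hXsucc k]
      simp [picard, ih]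
  have hXc : ∀ k, ContinuousOn (X k) (Icc 0 T) := by
    intro k
    induction k with
    | zero => exact continuousOn_const
    | succ k ih =>
      rw [hXsucc k]
      exact aux_picard_cont hT.le hL hf_cont hf_growth hu_meas hC ih
  -- y is a fixed point of the Picard operator on [0,T]
  have hy0 : y 0 = y₀ := by
    have := hy_sol 0 ⟨le_refl 0, hT.le⟩
    simpa using this
  have hyfix : ∀ t ∈ Icc (0:ℝ) T, y t = picard f u y t := by
    intro t ht
    rw [picard, hy0]
    exact hy_sol t ht
  -- bound for ‖x - y t‖ on [0,T]
  obtain ⟨M, hM⟩ := isCompact_Icc.exists_bound_of_continuousOn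
    (continuousOn_const.sub hy : ContinuousOn (fun t => x - y t) (Icc 0 T))
  have hM0 : 0 ≤ M := le_trans (norm_nonneg _) (hM 0 ⟨le_refl 0, hT.le⟩)
  have hA0 : 0 ≤ ‖x - y₀‖ := norm_nonneg _
  -- Claim 1
  have claim1 : ∀ k, ∀ t ∈ Icc (0:ℝ) T,
      ‖X k t - y t‖ ≤ ‖x - y₀‖ * Real.exp (L * t) + M * (L * t) ^ k / (k.factorial : ℝ) := by
    intro k
    induction k with
    | zero =>
      intro t ht
      have h1 : ‖x - y t‖ ≤ M := hM t ht
      have h2 : (0:ℝ) ≤ ‖x - y₀‖ * Real.exp (L * t) := by positivity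
      simp only [pow_zero, Nat.factorial_zero, Nat.cast_one, mul_one]
      have : X 0 t = x := rfl
      rw [this]
      linarith
    | succ k ih =>
      intro t ht
      have hkfac : ((k.factorial : ℝ)) ≠ 0 := by
        exact_mod_cast k.factorial_ne_zero
      have hksfac : (((k+1).factorial : ℝ)) ≠ 0 := by
        exact_mod_cast (k+1).factorial_ne_zero
      set g : ℝ → ℝ := fun s => ‖x - y₀‖ * Real.exp (L * s) + M * (L * s) ^ k / (k.factorial : ℝ)
        with hgdef
      have hgc : Continuous g := by
        fun_prop
      have hg0 : ∀ s ∈ Icc (0:ℝ) T, 0 ≤ g s := by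
        intro s hs
        have : (0:ℝ) ≤ L * s := mul_nonneg hL hs.1
        positivity
      have hmaster := aux_master hT.le hL hf_cont hf_lip hf_growth hu_meas hC
        (hXc k) hy hgc hg0 ih ht
      -- rewrite both sides
      have heq1 : X (k+1) t = picard f u (X k) t := by rw [hXsucc k]
      have heq2 : y t = picard f u y t := hyfix t ht
      -- compute the integral
      have hint : (∫ s in (0:ℝ)..t, L * g s) =
          (‖x - y₀‖ * Real.exp (L * t) + M * (L * t) ^ (k+1) / ((k+1).factorial : ℝ))
          - ‖x - y₀‖ := by
        have hderiv : ∀ s ∈ uIcc (0:ℝ) t, HasDerivAt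
            (fun s => ‖x - y₀‖ * Real.exp (L * s) + M * (L * s) ^ (k+1) / ((k+1).factorial : ℝ))
            (L * g s) s := by
          intro s _
          have h1 : HasDerivAt (fun s : ℝ => L * s) L s := by
            simpa using (hasDerivAt_id s).const_mul L
          have he : HasDerivAt (fun s => Real.exp (L * s)) (Real.exp (L * s) * L) s :=
            (Real.hasDerivAt_exp (L * s)).comp s h1
          have hp : HasDerivAt (fun s => (L * s) ^ (k+1)) (((k+1 : ℕ) : ℝ) * (L * s) ^ k * L) s := by
            simpa [Function.comp_def] using (hasDerivAt_pow (k+1) (L * s)).comp s h1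
          have hsum := (he.const_mul (‖x - y₀‖)).add
            ((hp.const_mul M).div_const ((k+1).factorial : ℝ))
          refine hsum.congr_deriv ?_
          rw [hgdef]
          have hfac : (((k+1).factorial : ℝ)) = ((k:ℝ) + 1) * (k.factorial : ℝ) := by
            rw [Nat.factorial_succ]; push_cast; ring
          rw [hfac]; field_simp
          push_cast; ring
        have hcont : IntervalIntegrable (fun s => L * g s) volume 0 t :=
          (continuous_const.mul hgc).intervalIntegrable 0 t
        have := intervalIntegral.integral_eq_sub_of_hasDerivAt hderiv hcont
        rw [this]
        simp [pow_succ]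
        try ring
      rw [heq1, heq2]
      calc ‖picard f u (X k) t - picard f u y t‖
          ≤ ‖X k 0 - y 0‖ + ∫ s in (0:ℝ)..t, L * g s := hmaster
        _ = ‖x - y₀‖ + ((‖x - y₀‖ * Real.exp (L * t) + M * (L * t) ^ (k+1) / ((k+1).factorial : ℝ))
            - ‖x - y₀‖) := by rw [hint, hX0 k, hy0]
        _ = ‖x - y₀‖ * Real.exp (L * t) + M * (L * t) ^ (k+1) / ((k+1).factorial : ℝ) := by ring
  -- Claim 2
  set D : ℝ := L * T * (‖x‖ + C) with hDdef
  have hD0 : 0 ≤ D := by positivity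
  have claim2 : ∀ k, ∀ t ∈ Icc (0:ℝ) T, ‖X (k+1) t - X k t‖ ≤ (L * T) ^ k * D := by
    intro k
    induction k with
    | zero =>
      intro t ht
      have heq : X 1 t - X 0 t = ∫ τ in (0:ℝ)..t, f x (u τ) := by
        rw [hXsucc 0]
        show (fun _ => x) 0 + (∫ τ in (0:ℝ)..t, f ((fun _ => x) τ) (u τ)) - x = _
        simp
      rw [heq]
      simp only [pow_zero, one_mul]
      have hb : ‖∫ τ in (0:ℝ)..t, f x (u τ)‖ ≤ (L * ‖x‖ + L * C) * |t - 0| := by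
        refine intervalIntegral.norm_integral_le_of_norm_le_const fun s hs => ?_
        have hs' : s ∈ Icc (0:ℝ) T := by
          rw [uIoc_of_le ht.1] at hs
          exact ⟨hs.1.le, hs.2.trans ht.2⟩
        exact (hf_growth _ _).trans (by have := hC s hs'; gcongr)
      refine hb.trans ?_
      rw [abs_of_nonneg (by linarith [ht.1] : (0:ℝ) ≤ t - 0)]
      have h1 : L * ‖x‖ + L * C = L * (‖x‖ + C) := by ring
      rw [h1, hDdef]
      have h2 : t - 0 ≤ T := by linarith [ht.2]
      have h3 : (0:ℝ) ≤ L * (‖x‖ + C) := by positivity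
      calc L * (‖x‖ + C) * (t - 0) ≤ L * (‖x‖ + C) * T := by
            exact mul_le_mul_of_nonneg_left h2 h3
        _ = L * T * (‖x‖ + C) := by ring
    | succ k ih =>
      intro t ht
      have hgc : Continuous (fun _ : ℝ => (L * T) ^ k * D) := continuous_const
      have hg0 : ∀ s ∈ Icc (0:ℝ) T, 0 ≤ (L * T) ^ k * D := fun s _ => by positivity
      have hmaster := aux_master hT.le hL hf_cont hf_lip hf_growth hu_meas hC
        (hXc (k+1)) (hXc k) hgc hg0 ih ht
      rw [← hXsucc (k+1), ← hXsucc k] at hmaster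
      refine hmaster.trans ?_
      rw [hX0 (k+1), hX0 k]
      simp only [sub_self, norm_zero, zero_add]
      rw [intervalIntegral.integral_const]
      have : (t - 0) • (L * ((L * T) ^ k * D)) = t * L * ((L * T) ^ k * D) := by
        simp [smul_eq_mul]; ring
      rw [this]
      have h2 : t * L ≤ T * L := mul_le_mul_of_nonneg_right ht.2 hL
      have h3 : (0:ℝ) ≤ (L * T) ^ k * D := by positivity
      calc t * L * ((L * T) ^ k * D) ≤ T * L * ((L * T) ^ k * D) :=
            mul_le_mul_of_nonneg_right h2 h3
        _ = (L * T) ^ (k+1) * D := by ring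
  -- assemble
  have hr0 : (0:ℝ) ≤ L * T := by positivity
  have hr1 : (0:ℝ) < 1 - L * T := by linarith
  have key : ∀ N : ℕ, ‖X l T - y T‖ ≤
      (L * T) ^ l * D / (1 - L * T) + (‖x - y₀‖ * Real.exp (L * T) + M * (L * T) ^ (l + N)) := by
    intro N
    have htel : dist (X l T) (X (l + N) T) ≤ ∑ i ∈ Finset.range N, (L * T) ^ (l + i) * D := by
      refine (dist_le_range_sum_dist (fun i => X (l + i) T) N).trans ?_
      refine Finset.sum_le_sum fun i _ => ?_
      rw [dist_eq_norm, norm_sub_rev]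
      have := claim2 (l + i) T hTmem
      simpa [add_assoc] using this
    have hgeo : ∑ i ∈ Finset.range N, (L * T) ^ (l + i) * D ≤ (L * T) ^ l * D / (1 - L * T) := by
      have hsum : ∑ i ∈ Finset.range N, (L * T) ^ (l + i) * D
          = (∑ i ∈ Finset.range N, (L * T) ^ i) * ((L * T) ^ l * D) := by
        rw [Finset.sum_mul]
        exact Finset.sum_congr rfl fun i _ => by rw [pow_add]; ring
      have hg : (∑ i ∈ Finset.range N, (L * T) ^ i) ≤ 1 / (1 - L * T) := by
        rw [le_div_iff₀ hr1]
        have := geom_sum_mul (L * T) N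
        have h1 : (∑ i ∈ Finset.range N, (L * T) ^ i) * (1 - L * T) = 1 - (L * T) ^ N := by
          have := geom_sum_mul (L * T) N
          nlinarith [this]
        rw [h1]
        have : (0:ℝ) ≤ (L * T) ^ N := by positivity
        linarith
      rw [hsum]
      calc (∑ i ∈ Finset.range N, (L * T) ^ i) * ((L * T) ^ l * D)
          ≤ (1 / (1 - L * T)) * ((L * T) ^ l * D) := by
            refine mul_le_mul_of_nonneg_right hg (by positivity)
        _ = (L * T) ^ l * D / (1 - L * T) := by ring
    have hc1 := claim1 (l + N) T hTmem
    have hfacbd : M * (L * T) ^ (l + N) / ((l + N).factorial : ℝ) ≤ M * (L * T) ^ (l + N) := by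
      refine div_le_self (by positivity) ?_
      exact_mod_cast (l + N).factorial_pos
    calc ‖X l T - y T‖ = dist (X l T) (y T) := (dist_eq_norm _ _).symm
      _ ≤ dist (X l T) (X (l + N) T) + dist (X (l + N) T) (y T) := dist_triangle _ _ _
      _ ≤ ((L * T) ^ l * D / (1 - L * T)) +
          (‖x - y₀‖ * Real.exp (L * T) + M * (L * T) ^ (l + N)) := by
          refine add_le_add (htel.trans hgeo) ?_
          rw [dist_eq_norm]
          exact hc1.trans (by linarith)
  -- take the limit N → ∞
  have hlim : Filter.Tendsto
      (fun N : ℕ => (L * T) ^ l * D / (1 - L * T) +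
        (‖x - y₀‖ * Real.exp (L * T) + M * (L * T) ^ (l + N)))
      Filter.atTop
      (nhds ((L * T) ^ l * D / (1 - L * T) + (‖x - y₀‖ * Real.exp (L * T) + M * 0))) := by
    refine Filter.Tendsto.const_add _ (Filter.Tendsto.const_add _ ?_)
    have h1 : Filter.Tendsto (fun N : ℕ => (L * T) ^ N) Filter.atTop (nhds 0) :=
      tendsto_pow_atTop_nhds_zero_of_lt_one hr0 hLT
    have h2 : Filter.Tendsto (fun N : ℕ => M * ((L * T) ^ l * (L * T) ^ N)) Filter.atTop
        (nhds (M * ((L * T) ^ l * 0))) :=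
      (h1.const_mul _).const_mul M
    simpa [pow_add, mul_zero] using h2
  have hfinal : ‖X l T - y T‖ ≤
      (L * T) ^ l * D / (1 - L * T) + (‖x - y₀‖ * Real.exp (L * T) + M * 0) :=
    ge_of_tendsto' hlim key
  have hQ : Qiter f u T l x = X l T := rfl
  rw [hQ]
  refine hfinal.trans (le_of_eq ?_)
  rw [hDdef, hCdef]
  rw [pow_succ]
  ring
end
end

section
/- Let n,m be positive integers, L₁>0, L₂≥0, r>0 and ε>0. Let u:[0,r]→ℝᵐ be measurable and bounded, and let x:[0,r]→ℝⁿ be differentiable with |ẋ(t)| ≤ L₁|x(t)| + L₂|u(t)| for all t∈[0,r]. Then sup_{0≤s≤r}|x(s)| ≤ e^{((2+ε)/2)L₁ r} |x(0)| + (L₂/(εL₁)) · √(ε/(2+ε)) · √(e^{(2+ε)L₁ r} − 1) · sup_{0≤s≤r}|u(s)|. -/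
open Set MeasureTheory

noncomputable section

lemma sqrt_add_le_aux (a b : ℝ) (ha : 0 ≤ a) (hb : 0 ≤ b) :
    Real.sqrt (a + b) ≤ Real.sqrt a + Real.sqrt b := by
  have h : a + b ≤ (Real.sqrt a + Real.sqrt b) ^ 2 := by
    have h1 := Real.sq_sqrt ha
    have h2 := Real.sq_sqrt hb
    nlinarith [Real.sqrt_nonneg a, Real.sqrt_nonneg b]
  calc Real.sqrt (a + b) ≤ Real.sqrt ((Real.sqrt a + Real.sqrt b) ^ 2) := Real.sqrt_le_sqrt h
    _ = _ := Real.sqrt_sq (by positivity)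

set_option maxHeartbeats 1000000 in
/-- Trajectory bound used in the 'no predictor' case of the remarks following Theorem 2.2. -/
theorem stmt8 (n m : ℕ) (hn : 0 < n) (hm : 0 < m) (L₁ L₂ r ε : ℝ)
    (hL₁ : 0 < L₁) (hL₂ : 0 ≤ L₂) (hr : 0 < r) (hε : 0 < ε)
    (u : ℝ → EuclideanSpace ℝ (Fin m)) (hu_meas : Measurable u)
    (hu_bd : ∃ C, ∀ s ∈ Set.Icc (0:ℝ) r, ‖u s‖ ≤ C)
    (x x' : ℝ → EuclideanSpace ℝ (Fin n))
    (hx : ∀ t ∈ Set.Icc (0:ℝ) r, HasDerivAt x (x' t) t)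
    (hineq : ∀ t ∈ Set.Icc (0:ℝ) r, ‖x' t‖ ≤ L₁ * ‖x t‖ + L₂ * ‖u t‖) :
    (⨆ s : Set.Icc (0:ℝ) r, ‖x s‖) ≤
      Real.exp (((2 + ε) / 2) * L₁ * r) * ‖x 0‖ +
        (L₂ / (ε * L₁)) * Real.sqrt (ε / (2 + ε)) *
          Real.sqrt (Real.exp ((2 + ε) * L₁ * r) - 1) *
          ⨆ s : Set.Icc (0:ℝ) r, ‖u s‖ := by
  have h2ε : (0:ℝ) < 2 + ε := by linarith
  have hεL₁ : (0:ℝ) < ε * L₁ := mul_pos hε hL₁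
  set U : ℝ := ⨆ s : Set.Icc (0:ℝ) r, ‖u s‖ with hU_def
  have hne : Nonempty (Set.Icc (0:ℝ) r) := ⟨⟨0, le_refl 0, hr.le⟩⟩
  have hbdd : BddAbove (Set.range fun s : Set.Icc (0:ℝ) r => ‖u s‖) := by
    obtain ⟨C, hC⟩ := hu_bd
    exact ⟨C, by rintro _ ⟨s, rfl⟩; exact hC s s.2⟩
  have hU : ∀ s ∈ Set.Icc (0:ℝ) r, ‖u s‖ ≤ U := fun s hs =>
    le_ciSup hbdd (⟨s, hs⟩ : Set.Icc (0:ℝ) r)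
  have hU0 : 0 ≤ U := le_trans (norm_nonneg _) (hU 0 ⟨le_refl 0, hr.le⟩)
  -- The energy function and its derivative
  set V : ℝ → ℝ := fun t => inner ℝ (x t) (x t) with hV_def
  set V' : ℝ → ℝ := fun t =>
    (inner ℝ (x t) (x' t) : ℝ) + (inner ℝ (x' t) (x t) : ℝ) with hV'_def
  have hVx : ∀ t, V t = ‖x t‖ ^ 2 := fun t => real_inner_self_eq_norm_sq _
  have hVderiv : ∀ t ∈ Set.Icc (0:ℝ) r, HasDerivAt V (V' t) t := fun t ht =>
    HasDerivAt.inner ℝ (hx t ht) (hx t ht)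
  set K : ℝ := (2 + ε) * L₁ with hK_def
  have hK : 0 < K := mul_pos h2ε hL₁
  set δ : ℝ := ‖x 0‖ ^ 2 with hδ_def
  set ε₀ : ℝ := L₂ ^ 2 * U ^ 2 / (ε * L₁) with hε₀_def
  have hε₀0 : 0 ≤ ε₀ := by positivity
  -- Gronwall bound on V
  have hVcont : ContinuousOn V (Set.Icc 0 r) := fun t ht =>
    ((hVderiv t ht).continuousAt).continuousWithinAt
  have hgron : ∀ t ∈ Set.Icc (0:ℝ) r, V t ≤ gronwallBound δ K ε₀ (t - 0) := by
    apply le_gronwallBound_of_liminf_deriv_right_le hVcont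
    · intro t ht ρ hρ
      exact ((hVderiv t (Set.Ico_subset_Icc_self ht)).hasDerivWithinAt).liminf_right_slope_le hρ
    · simp [hVx, hδ_def]
    · intro t ht
      have ht' : t ∈ Set.Icc (0:ℝ) r := Set.Ico_subset_Icc_self ht
      have h1 : V' t ≤ 2 * (‖x t‖ * ‖x' t‖) := by
        have := real_inner_le_norm (x t) (x' t)
        have h2 := real_inner_le_norm (x' t) (x t)
        simp only [hV'_def]
        nlinarith
      have h2 : ‖x' t‖ ≤ L₁ * ‖x t‖ + L₂ * ‖u t‖ := hineq t ht'
      have h3 : ‖u t‖ ≤ U := hU t ht'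
      have hx0 : (0:ℝ) ≤ ‖x t‖ := norm_nonneg _
      have hu0 : (0:ℝ) ≤ ‖u t‖ := norm_nonneg _
      -- Young's inequality step
      have young : 2 * (L₂ * (‖x t‖ * ‖u t‖)) ≤ ε * L₁ * ‖x t‖ ^ 2 + L₂ ^ 2 * ‖u t‖ ^ 2 / (ε * L₁) := by
        have hc : L₂ ^ 2 * ‖u t‖ ^ 2 / (ε * L₁) * (ε * L₁) = L₂ ^ 2 * ‖u t‖ ^ 2 :=
          div_mul_cancel₀ _ hεL₁.ne'
        nlinarith [sq_nonneg (ε * L₁ * ‖x t‖ - L₂ * ‖u t‖), hεL₁,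
          div_nonneg (by positivity : (0:ℝ) ≤ L₂ ^ 2 * ‖u t‖ ^ 2) hεL₁.le]
      have hmono : L₂ ^ 2 * ‖u t‖ ^ 2 / (ε * L₁) ≤ ε₀ := by
        rw [hε₀_def]
        gcongr
      calc V' t ≤ 2 * (‖x t‖ * ‖x' t‖) := h1
        _ ≤ 2 * (‖x t‖ * (L₁ * ‖x t‖ + L₂ * ‖u t‖)) := by nlinarith
        _ = 2 * L₁ * ‖x t‖ ^ 2 + 2 * (L₂ * (‖x t‖ * ‖u t‖)) := by ring
        _ ≤ 2 * L₁ * ‖x t‖ ^ 2 + (ε * L₁ * ‖x t‖ ^ 2 + L₂ ^ 2 * ‖u t‖ ^ 2 / (ε * L₁)) := by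
            linarith [young]
        _ ≤ K * V t + ε₀ := by
            rw [hVx, hK_def]; nlinarith
  -- pointwise bound on ‖x t‖
  have key : ∀ t ∈ Set.Icc (0:ℝ) r,
      ‖x t‖ ≤ Real.exp (((2 + ε) / 2) * L₁ * r) * ‖x 0‖ +
        (L₂ / (ε * L₁)) * Real.sqrt (ε / (2 + ε)) *
          Real.sqrt (Real.exp ((2 + ε) * L₁ * r) - 1) * U := by
    intro t ht
    have hVt := hgron t ht
    rw [sub_zero, gronwallBound_of_K_ne_0 hK.ne'] at hVt
    have hexp : Real.exp (K * t) ≤ Real.exp (K * r) := by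
      apply Real.exp_le_exp.2
      exact mul_le_mul_of_nonneg_left ht.2 hK.le
    have hVt2 : V t ≤ δ * Real.exp (K * r) + ε₀ / K * (Real.exp (K * r) - 1) := by
      have hδ0 : (0:ℝ) ≤ δ := sq_nonneg _
      have h1 : δ * Real.exp (K * t) ≤ δ * Real.exp (K * r) := by gcongr
      have h2 : ε₀ / K * (Real.exp (K * t) - 1) ≤ ε₀ / K * (Real.exp (K * r) - 1) := by
        apply mul_le_mul_of_nonneg_left _ (by positivity)
        linarith
      linarith
    have hxle : ‖x t‖ ≤ Real.sqrt (δ * Real.exp (K * r) + ε₀ / K * (Real.exp (K * r) - 1)) := by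
      rw [← Real.sqrt_sq (norm_nonneg (x t)), ← hVx]
      exact Real.sqrt_le_sqrt hVt2
    have hexp1 : (1:ℝ) ≤ Real.exp (K * r) := Real.one_le_exp (by positivity)
    have hsum : Real.sqrt (δ * Real.exp (K * r) + ε₀ / K * (Real.exp (K * r) - 1)) ≤
        Real.sqrt (δ * Real.exp (K * r)) + Real.sqrt (ε₀ / K * (Real.exp (K * r) - 1)) :=
      sqrt_add_le_aux _ _ (by positivity) (mul_nonneg (by positivity) (by linarith))
    have e1 : Real.sqrt (δ * Real.exp (K * r)) = Real.exp (((2 + ε) / 2) * L₁ * r) * ‖x 0‖ := by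
      rw [hδ_def, Real.sqrt_mul (sq_nonneg _), Real.sqrt_sq (norm_nonneg _), ← Real.exp_half]
      rw [mul_comm]
      congr 1
      rw [hK_def]; ring
    have e2 : Real.sqrt (ε₀ / K * (Real.exp (K * r) - 1)) =
        (L₂ / (ε * L₁)) * Real.sqrt (ε / (2 + ε)) * Real.sqrt (Real.exp ((2 + ε) * L₁ * r) - 1) * U := by
      have hc0 : (0:ℝ) ≤ (L₂ / (ε * L₁)) * Real.sqrt (ε / (2 + ε)) * U := by positivity
      have hcsq : ε₀ / K = ((L₂ / (ε * L₁)) * Real.sqrt (ε / (2 + ε)) * U) ^ 2 := by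
        have hs : Real.sqrt (ε / (2 + ε)) ^ 2 = ε / (2 + ε) :=
          Real.sq_sqrt (by positivity)
        rw [mul_pow, mul_pow, hs, hε₀_def, hK_def]
        field_simp
      rw [hcsq, Real.sqrt_mul (sq_nonneg _), Real.sqrt_sq hc0, hK_def]
      ring
    calc ‖x t‖ ≤ _ := hxle
      _ ≤ _ := hsum
      _ = _ := by rw [e1, e2]
  exact ciSup_le fun s => key s s.2

end
end

section
/- Let n,m be positive integers, L₁>0, L₂≥0, R≥0, r>0 and ε>0. Let k:ℝⁿ→ℝᵐ satisfy |k(a)−k(b)| ≤ R|a−b| for all a,b∈ℝⁿ. Let u:[0,r]→ℝᵐ be measurable and bounded, and let x:[0,r]→ℝⁿ be differentiable with |ẋ(t)| ≤ L₁|x(t)| + L₂|u(t)| for all t∈[0,r]. Then |k(x(r)) − k(x(0))| ≤ R L₁ r e^{((2+ε)/2)L₁ r} |x(0)| + R L₂ r · ( (1/ε)·√(ε/(2+ε))·√(e^{(2+ε)L₁ r} − 1) + 1 ) · sup_{0≤s≤r}|u(s)|. -/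
open Set MeasureTheory

noncomputable section

lemma two_mul_le_exp {s : ℝ} (hs : 0 ≤ s) : 2 * s ≤ Real.exp s := by
  have h := Real.add_one_le_exp (s / 2)
  have h2 : Real.exp s = Real.exp (s / 2) * Real.exp (s / 2) := by
    rw [← Real.exp_add]; ring_nf
  nlinarith [sq_nonneg (s / 2 - 1)]

lemma exp_sub_one_le {t : ℝ} : Real.exp t - 1 ≤ t * Real.exp t := by
  have h := Real.add_one_le_exp (-t)
  have h2 : Real.exp (-t) = (Real.exp t)⁻¹ := Real.exp_neg t
  have h3 : 0 < Real.exp t := Real.exp_pos t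
  rw [h2] at h
  have := mul_le_mul_of_nonneg_right h h3.le
  rw [inv_mul_cancel₀ h3.ne'] at this
  nlinarith

lemma key_ineq (ε a : ℝ) (hε : 0 < ε) (ha : 0 ≤ a) :
    ε * (2 + ε) * (Real.exp a - 1) ^ 2 ≤ Real.exp ((2 + ε) * a) - 1 := by
  set F : ℝ → ℝ := fun t => Real.exp ((2 + ε) * t) - ε * (2 + ε) * (Real.exp t - 1) ^ 2 with hF
  have hder : ∀ t, HasDerivAt F
      ((2 + ε) * Real.exp ((2 + ε) * t) -
        ε * (2 + ε) * (2 * (Real.exp t - 1) * Real.exp t)) t := by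
    intro t
    have hI : HasDerivAt (fun s : ℝ => (2 + ε) * s) (2 + ε) t := by
      simpa using (hasDerivAt_id t).const_mul (2 + ε)
    have h1 : HasDerivAt (fun t : ℝ => Real.exp ((2 + ε) * t))
        (Real.exp ((2 + ε) * t) * (2 + ε)) t := hI.exp
    have h2 : HasDerivAt (fun t : ℝ => (Real.exp t - 1) ^ 2)
        (2 * (Real.exp t - 1) ^ 1 * Real.exp t) t :=
      HasDerivAt.pow (n := 2) ((Real.hasDerivAt_exp t).sub_const 1)
    have := h1.sub ((h2.const_mul (ε * (2 + ε))))
    refine HasDerivAt.congr_deriv this ?_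
    ring
  have hpos : ∀ t, 0 ≤ (2 + ε) * Real.exp ((2 + ε) * t) -
      ε * (2 + ε) * (2 * (Real.exp t - 1) * Real.exp t) := by
    intro t
    have h2ε : (0:ℝ) < 2 + ε := by linarith
    rcases le_or_gt t 0 with ht | ht
    · have he : Real.exp t - 1 ≤ 0 := by
        have := Real.exp_le_one_iff.mpr ht
        linarith
      have hp := Real.exp_pos ((2 + ε) * t)
      have hpt := Real.exp_pos t
      have hq : (Real.exp t - 1) * Real.exp t ≤ 0 :=
        mul_nonpos_of_nonpos_of_nonneg he hpt.le
      nlinarith [mul_nonneg (mul_nonneg hε.le h2ε.le) (neg_nonneg.2 hq),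
        mul_pos h2ε hp]
    · have hsplit : Real.exp ((2 + ε) * t) = Real.exp t * Real.exp t * Real.exp (ε * t) := by
        rw [← Real.exp_add, ← Real.exp_add]; ring_nf
      have h1 : Real.exp t - 1 ≤ t * Real.exp t := exp_sub_one_le
      have h2 : 2 * (ε * t) ≤ Real.exp (ε * t) := two_mul_le_exp (by positivity)
      have hpt := Real.exp_pos t
      have b1 : (Real.exp t - 1) * Real.exp t ≤ t * Real.exp t * Real.exp t := by
        nlinarith [mul_le_mul_of_nonneg_right h1 hpt.le]
      have b2 : 2 * (ε * t) * (Real.exp t * Real.exp t) ≤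
          Real.exp (ε * t) * (Real.exp t * Real.exp t) :=
        mul_le_mul_of_nonneg_right h2 (mul_pos hpt hpt).le
      rw [hsplit]
      nlinarith [mul_le_mul_of_nonneg_left b1
        (by positivity : (0:ℝ) ≤ 2 * ε * (2 + ε)),
        mul_le_mul_of_nonneg_left b2 h2ε.le]
  have hmono : Monotone F :=
    monotone_of_deriv_nonneg (fun t => (hder t).differentiableAt)
      (fun t => by rw [(hder t).deriv]; exact hpos t)
  have := hmono ha
  simp only [hF] at this
  simp only [mul_zero, Real.exp_zero] at this
  nlinarith [this]

/-- Error between delayed feedback value k(x(0)) and exact predictor value k(x(r))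
in the 'no predictor' case of the remarks following Theorem 2.2. -/
theorem stmt9 (n m : ℕ) (hn : 0 < n) (hm : 0 < m) (L₁ L₂ R r ε : ℝ)
    (hL₁ : 0 < L₁) (hL₂ : 0 ≤ L₂) (hR : 0 ≤ R) (hr : 0 < r) (hε : 0 < ε)
    (k : EuclideanSpace ℝ (Fin n) → EuclideanSpace ℝ (Fin m))
    (hk : ∀ a b : EuclideanSpace ℝ (Fin n), ‖k a - k b‖ ≤ R * ‖a - b‖)
    (u : ℝ → EuclideanSpace ℝ (Fin m)) (hu_meas : Measurable u)
    (hu_bd : ∃ C, ∀ s ∈ Set.Icc (0:ℝ) r, ‖u s‖ ≤ C)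
    (x x' : ℝ → EuclideanSpace ℝ (Fin n))
    (hx : ∀ t ∈ Set.Icc (0:ℝ) r, HasDerivAt x (x' t) t)
    (hineq : ∀ t ∈ Set.Icc (0:ℝ) r, ‖x' t‖ ≤ L₁ * ‖x t‖ + L₂ * ‖u t‖) :
    ‖k (x r) - k (x 0)‖ ≤
      R * L₁ * r * Real.exp (((2 + ε) / 2) * L₁ * r) * ‖x 0‖ +
        R * L₂ * r *
          ((1 / ε) * Real.sqrt (ε / (2 + ε)) * Real.sqrt (Real.exp ((2 + ε) * L₁ * r) - 1) + 1) *
          ⨆ s : Set.Icc (0:ℝ) r, ‖u s‖ := by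
  obtain ⟨C, hC⟩ := hu_bd
  set U : ℝ := ⨆ s : Set.Icc (0:ℝ) r, ‖u s‖ with hUdef
  have hbdd : BddAbove (Set.range fun s : Set.Icc (0:ℝ) r => ‖u (s:ℝ)‖) := by
    refine ⟨C, ?_⟩
    rintro _ ⟨s, rfl⟩
    exact hC s s.2
  have hUle : ∀ s ∈ Set.Icc (0:ℝ) r, ‖u s‖ ≤ U := fun s hs => le_ciSup hbdd ⟨s, hs⟩
  have hU0 : 0 ≤ U := le_trans (norm_nonneg _) (hUle 0 ⟨le_refl 0, hr.le⟩)
  -- Grönwall bound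
  have hxc : ContinuousOn x (Set.Icc 0 r) := fun t ht =>
    ((hx t ht).continuousAt).continuousWithinAt
  have hgron := norm_le_gronwallBound_of_norm_deriv_right_le (f := x) (f' := x')
    (δ := ‖x 0‖) (K := L₁) (ε := L₂ * U) (a := 0) (b := r) hxc
    (fun t ht => ((hx t (Set.Ico_subset_Icc_self ht)).hasDerivWithinAt))
    (le_refl _)
    (fun t ht => by
      have h1 := hineq t (Set.Ico_subset_Icc_self ht)
      have h2 : L₂ * ‖u t‖ ≤ L₂ * U :=
        mul_le_mul_of_nonneg_left (hUle t (Set.Ico_subset_Icc_self ht)) hL₂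
      linarith)
  set A : ℝ := Real.exp (L₁ * r) with hAdef
  have hA1 : 1 ≤ A := Real.one_le_exp (by positivity)
  set M : ℝ := ‖x 0‖ * A + L₂ * U / L₁ * (A - 1) with hMdef
  have hM : ∀ t ∈ Set.Icc (0:ℝ) r, ‖x t‖ ≤ M := by
    intro t ht
    have h := hgron t ht
    rw [gronwallBound_of_K_ne_0 hL₁.ne'] at h
    simp only [sub_zero] at h
    have hle : Real.exp (L₁ * t) ≤ A := Real.exp_le_exp.2 (by nlinarith [ht.1, ht.2])
    have h1 : 1 ≤ Real.exp (L₁ * t) := Real.one_le_exp (by nlinarith [ht.1])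
    have hx0 : 0 ≤ ‖x 0‖ := norm_nonneg _
    have hq : 0 ≤ L₂ * U / L₁ := by positivity
    calc ‖x t‖ ≤ ‖x 0‖ * Real.exp (L₁ * t) + L₂ * U / L₁ * (Real.exp (L₁ * t) - 1) := h
      _ ≤ M := by rw [hMdef]; nlinarith
  -- mean value bound on [0, r]
  have hseg := norm_image_sub_le_of_norm_deriv_le_segment' (f := x) (f' := x')
    (a := 0) (b := r) (C := L₁ * M + L₂ * U)
    (fun t ht => (hx t ht).hasDerivWithinAt)
    (fun t ht => by
      have h1 := hineq t (Set.Ico_subset_Icc_self ht)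
      have h2 : L₁ * ‖x t‖ ≤ L₁ * M :=
        mul_le_mul_of_nonneg_left (hM t (Set.Ico_subset_Icc_self ht)) hL₁.le
      have h3 : L₂ * ‖u t‖ ≤ L₂ * U :=
        mul_le_mul_of_nonneg_left (hUle t (Set.Ico_subset_Icc_self ht)) hL₂
      linarith)
    r (Set.right_mem_Icc.2 hr.le)
  rw [sub_zero] at hseg
  have hkbound : ‖k (x r) - k (x 0)‖ ≤ R * ((L₁ * M + L₂ * U) * r) :=
    le_trans (hk _ _) (mul_le_mul_of_nonneg_left hseg hR)
  refine le_trans hkbound ?_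
  -- final comparison of constants
  set E : ℝ := Real.exp ((2 + ε) * L₁ * r) with hEdef
  have hE1 : 0 ≤ E - 1 := by
    have : (1:ℝ) ≤ E := Real.one_le_exp (by positivity)
    linarith
  set S : ℝ := Real.sqrt (E - 1) with hSdef
  have hS0 : 0 ≤ S := Real.sqrt_nonneg _
  set Cε : ℝ := (1 / ε) * Real.sqrt (ε / (2 + ε)) * S with hCεdef
  have hCε0 : 0 ≤ Cε := by
    have := Real.sqrt_nonneg (ε / (2 + ε))
    positivity
  have h2ε : (0:ℝ) < 2 + ε := by linarith
  -- key: A - 1 ≤ Cε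
  have hf2 : A - 1 ≤ Cε := by
    have hkey := key_ineq ε (L₁ * r) hε (by positivity)
    have hEeq : Real.exp ((2 + ε) * (L₁ * r)) = E := by rw [hEdef, mul_assoc]
    rw [hEeq] at hkey
    have hA0 : 0 ≤ A - 1 := by linarith
    have hsq : (A - 1) ^ 2 ≤ Cε ^ 2 := by
      have hCsq : Cε ^ 2 = (1 / ε) ^ 2 * (ε / (2 + ε)) * (E - 1) := by
        rw [hCεdef, mul_pow, mul_pow, Real.sq_sqrt (by positivity), Real.sq_sqrt hE1]
      rw [hCsq]
      rw [show (1 / ε) ^ 2 * (ε / (2 + ε)) = 1 / (ε * (2 + ε)) by field_simp]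
      rw [one_div, inv_mul_eq_div, le_div_iff₀ (by positivity)]
      rw [← hAdef] at hkey
      linear_combination hkey
    calc A - 1 = Real.sqrt ((A - 1) ^ 2) := (Real.sqrt_sq hA0).symm
      _ ≤ Real.sqrt (Cε ^ 2) := Real.sqrt_le_sqrt hsq
      _ = Cε := Real.sqrt_sq hCε0
  have hf1 : A ≤ Real.exp (((2 + ε) / 2) * L₁ * r) := by
    rw [hAdef]
    apply Real.exp_le_exp.2
    nlinarith [mul_pos (mul_pos hε hL₁) hr]
  have hx0 : 0 ≤ ‖x 0‖ := norm_nonneg _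
  have expand : R * ((L₁ * M + L₂ * U) * r) =
      R * L₁ * r * A * ‖x 0‖ + R * L₂ * r * ((A - 1) + 1) * U := by
    rw [hMdef]; field_simp; ring
  rw [expand]
  have e1 : R * L₁ * r * A * ‖x 0‖ ≤ R * L₁ * r * Real.exp (((2 + ε) / 2) * L₁ * r) * ‖x 0‖ := by
    have : R * L₁ * r * A ≤ R * L₁ * r * Real.exp (((2 + ε) / 2) * L₁ * r) :=
      mul_le_mul_of_nonneg_left hf1 (by positivity)
    exact mul_le_mul_of_nonneg_right this hx0
  have e2 : R * L₂ * r * ((A - 1) + 1) * U ≤ R * L₂ * r * (Cε + 1) * U := by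
    have : R * L₂ * r * ((A - 1) + 1) ≤ R * L₂ * r * (Cε + 1) :=
      mul_le_mul_of_nonneg_left (by linarith) (by positivity)
    exact mul_le_mul_of_nonneg_right this hU0
  linarith
end
end

section
/- Let m be a positive integer, μ>0, let g:[0,∞)→ℝᵐ and p:[0,∞)→ℝᵐ be continuous, let h:[0,∞)→[0,∞) be continuous, and let w,κ:[0,∞)→ℝᵐ be differentiable functions such that for all t≥0: ẇ(t) = g(t) − μ(w(t) − p(t)), |κ̇(t) − g(t)| ≤ h(t), and |κ(t) − p(t)| ≤ h(t). Then for all t≥0, |w(t) − κ(t)| ≤ e^{−μt} |w(0) − κ(0)| + (1 + 1/μ) · sup_{0≤s≤t} h(s). -/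
open Set MeasureTheory

noncomputable section

/-- The tracking estimate (2.43) used in the proof of Theorem 2.3. -/
theorem stmt10 (m : ℕ) (hm : 0 < m) (μ : ℝ) (hμ : 0 < μ)
    (g p : ℝ → EuclideanSpace ℝ (Fin m))
    (hg : ContinuousOn g (Set.Ici 0)) (hp : ContinuousOn p (Set.Ici 0))
    (h : ℝ → ℝ) (hh_cont : ContinuousOn h (Set.Ici 0)) (hh_nonneg : ∀ t ≥ (0:ℝ), 0 ≤ h t)
    (w κ w' κ' : ℝ → EuclideanSpace ℝ (Fin m))
    (hw : ∀ t ≥ (0:ℝ), HasDerivAt w (w' t) t)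
    (hκ : ∀ t ≥ (0:ℝ), HasDerivAt κ (κ' t) t)
    (hode : ∀ t ≥ (0:ℝ), w' t = g t - μ • (w t - p t))
    (hgerr : ∀ t ≥ (0:ℝ), ‖κ' t - g t‖ ≤ h t)
    (hperr : ∀ t ≥ (0:ℝ), ‖κ t - p t‖ ≤ h t) :
    ∀ t ≥ (0:ℝ), ‖w t - κ t‖ ≤
      Real.exp (-μ * t) * ‖w 0 - κ 0‖ + (1 + 1 / μ) * ⨆ s : Set.Icc (0:ℝ) t, h s := by
  intro t ht
  set H : ℝ := ⨆ s : Set.Icc (0:ℝ) t, h s with hH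
  have hne : (Set.Icc (0:ℝ) t).Nonempty := ⟨0, le_refl 0, ht⟩
  have hbdd : BddAbove (Set.range fun s : Set.Icc (0:ℝ) t => h s) := by
    rw [show (Set.range fun s : Set.Icc (0:ℝ) t => h s) = h '' Set.Icc 0 t from
      (Set.image_eq_range h _).symm]
    exact (isCompact_Icc.image_of_continuousOn
      (hh_cont.mono (fun x hx => hx.1))).bddAbove
  have hHle : ∀ s, 0 ≤ s → s ≤ t → h s ≤ H := fun s hs1 hs2 =>
    le_ciSup hbdd (⟨s, hs1, hs2⟩ : Set.Icc (0:ℝ) t)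
  have hH0 : 0 ≤ H := le_trans (hh_nonneg 0 le_rfl) (hHle 0 le_rfl ht)
  -- v s = exp(μ s) • (w s - κ s)
  set v : ℝ → EuclideanSpace ℝ (Fin m) :=
    fun s => Real.exp (μ * s) • (w s - κ s) with hv
  set v' : ℝ → EuclideanSpace ℝ (Fin m) :=
    fun s => Real.exp (μ * s) • ((g s - κ' s) + μ • (p s - κ s)) with hv'
  have hvderiv : ∀ s ≥ (0:ℝ), HasDerivAt v (v' s) s := by
    intro s hs
    have hexp : HasDerivAt (fun s => Real.exp (μ * s)) (Real.exp (μ * s) * μ) s := by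
      simpa using (((hasDerivAt_id s).const_mul μ).exp)
    have hd : HasDerivAt (fun s => w s - κ s) (w' s - κ' s) s :=
      (hw s hs).sub (hκ s hs)
    have := hexp.smul hd
    refine this.congr_deriv ?_
    rw [hode s hs]
    simp only [hv']
    module
  have hvbound : ∀ s ∈ Set.Ico (0:ℝ) t, ‖v' s‖ ≤ (1 + μ) * H * Real.exp (μ * s) := by
    intro s hs
    have hs0 := hs.1
    have hsH := hHle s hs.1 hs.2.le
    simp only [hv', norm_smul, Real.norm_eq_abs, abs_of_pos (Real.exp_pos _)]
    rw [mul_comm ((1 + μ) * H)]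
    apply mul_le_mul_of_nonneg_left _ (Real.exp_pos _).le
    calc ‖g s - κ' s + μ • (p s - κ s)‖ ≤ ‖g s - κ' s‖ + ‖μ • (p s - κ s)‖ :=
          norm_add_le _ _
      _ ≤ h s + μ * h s := by
          apply add_le_add
          · rw [← norm_neg]; simpa using hgerr s hs0
          · rw [norm_smul, Real.norm_eq_abs, abs_of_pos hμ]
            apply mul_le_mul_of_nonneg_left _ hμ.le
            rw [← norm_neg]; simpa using hperr s hs0
      _ ≤ H + μ * H := by
          apply add_le_add hsH (mul_le_mul_of_nonneg_left hsH hμ.le)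
      _ = (1 + μ) * H := by ring
  set B : ℝ → ℝ := fun s => ‖w 0 - κ 0‖ + (1 + μ) * H / μ * (Real.exp (μ * s) - 1)
    with hB
  set B' : ℝ → ℝ := fun s => (1 + μ) * H * Real.exp (μ * s) with hB'
  have hBderiv : ∀ s, HasDerivAt B (B' s) s := by
    intro s
    have hexp : HasDerivAt (fun s => Real.exp (μ * s)) (Real.exp (μ * s) * μ) s := by
      simpa using (((hasDerivAt_id s).const_mul μ).exp)
    have := (((hexp.sub_const 1).const_mul ((1 + μ) * H / μ)).const_add ‖w 0 - κ 0‖)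
    refine this.congr_deriv ?_
    simp only [hB']
    field_simp
  have hvcont : ContinuousOn v (Set.Icc 0 t) := by
    intro x hx
    exact (((Real.continuous_exp.comp (continuous_const.mul continuous_id)).continuousAt).smul
      (((hw x hx.1).continuousAt.sub (hκ x hx.1).continuousAt))).continuousWithinAt
  have key : ∀ x ∈ Set.Icc (0:ℝ) t, ‖v x‖ ≤ B x := by
    intro x hx
    exact image_norm_le_of_norm_deriv_right_le_deriv_boundary hvcont
      (fun x hx => (hvderiv x hx.1).hasDerivWithinAt)
      (by simp [hv, hB]) hBderiv hvbound hx
  have hvt := key t ⟨ht, le_rfl⟩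
  have hnv : ‖v t‖ = Real.exp (μ * t) * ‖w t - κ t‖ := by
    simp [hv, norm_smul, abs_of_pos (Real.exp_pos _)]
  rw [hnv] at hvt
  have hexppos := Real.exp_pos (μ * t)
  have hexple : Real.exp (-μ * t) ≤ 1 := by
    apply Real.exp_le_one_iff.mpr
    nlinarith
  have hinv : Real.exp (-μ * t) * Real.exp (μ * t) = 1 := by
    rw [← Real.exp_add]; simp
  have h1 : ‖w t - κ t‖ ≤ Real.exp (-μ * t) * B t := by
    have := mul_le_mul_of_nonneg_left hvt (Real.exp_pos (-μ * t)).le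
    rw [← mul_assoc, hinv, one_mul] at this
    exact this
  refine h1.trans ?_
  simp only [hB]
  rw [mul_add]
  apply add_le_add le_rfl
  rw [mul_comm (Real.exp (-μ * t)), mul_assoc]
  have hexpval : (Real.exp (μ * t) - 1) * Real.exp (-μ * t) = 1 - Real.exp (-μ * t) := by
    rw [sub_mul, mul_comm, hinv]; ring
  rw [hexpval, div_mul_eq_mul_div, div_le_iff₀ hμ]
  have hfact : (1 + 1/μ) * H * μ = (1 + μ) * H := by
    rw [add_mul, add_mul, one_mul, one_div, mul_assoc,
      show μ⁻¹ * (H * μ) = μ⁻¹ * μ * H by ring, inv_mul_cancel₀ hμ.ne', one_mul]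
    ring
  rw [hfact]
  nlinarith [mul_nonneg (mul_nonneg (by linarith : (0:ℝ) ≤ 1 + μ) hH0)
    (Real.exp_pos (-μ * t)).le]
end
end
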